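/- Every graph in the family F_5 is 4-χρ-vertex-critical; that is, for all A, B ∈ {P_4, C_4} and every even l ≥ 0, the graph G obtained by joining a non-pendant vertex of A to a non-pendant vertex of B by a path with exactly l internal vertices satisfies χρ(G) = 4 and χρ(G − v) < 4 for every vertex v. -/

import Mathlib

open SimpleGraph

/-- A `k`-packing coloring of `G`: colors in `{1,…,k}` and distinct vertices of equal color `i`
are at (extended, shortest-path) distance greater than `i`. -/
def IsPackingColoring {V : Type*} (G : SimpleGraph V) (k : ℕ) (c : V → ℕ) : Prop :=
  (∀ v, 1 ≤ c v ∧ c v ≤ k) ∧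
    ∀ u v : V, u ≠ v → c u = c v → (c u : ℕ∞) < G.edist u v

/-- The packing chromatic number of `G`: the least `k` admitting a `k`-packing coloring. -/
noncomputable def packingChromaticNumber {V : Type*} (G : SimpleGraph V) : ℕ :=
  sInf {k | ∃ c : V → ℕ, IsPackingColoring G k c}

/-- `G` is `4`-`χρ`-vertex-critical: `χρ(G) = 4` and deleting any vertex drops `χρ` below `4`. -/
def FourVertexCritical {V : Type*} (G : SimpleGraph V) : Prop :=
  packingChromaticNumber G = 4 ∧
    ∀ v : V, packingChromaticNumber (G.induce ({v}ᶜ : Set V)) < 4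

/-- `G` contains a (not necessarily induced) subgraph isomorphic to `H`. -/
def HasCopy {W V : Type*} (H : SimpleGraph W) (G : SimpleGraph V) : Prop :=
  ∃ f : H →g G, Function.Injective f

/-- The cycle on `n` vertices (for `n ≥ 3`). -/
def CycGraph (n : ℕ) : SimpleGraph (Fin n) :=
  SimpleGraph.fromRel (fun i j => (i.val + 1) % n = j.val)

/-- A member of the family `𝓕₁`: two triangles `{0,1,2}` and `{l+3,l+4,l+5}` joined by a
path from `u = 2` to `v = l+3` with `l` internal vertices `3,…,l+2`. -/
def F1Graph (l : ℕ) : SimpleGraph (Fin (l + 6)) :=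
  SimpleGraph.fromRel (fun i j =>
    j.val = i.val + 1 ∨ (i.val = 0 ∧ j.val = 2) ∨ (i.val = l + 3 ∧ j.val = l + 5))

/-- A member of the family `𝓕₂`: a triangle `{0,1,2}` joined by a path from `u = 2` to
`v = l+3` with `l` internal vertices `3,…,l+2`, where `v` is the middle vertex of the path
`(l+4)-(l+3)-(l+5)`. -/
def F2Graph (l : ℕ) : SimpleGraph (Fin (l + 6)) :=
  SimpleGraph.fromRel (fun i j =>
    (j.val = i.val + 1 ∧ j.val ≤ l + 4) ∨ (i.val = 0 ∧ j.val = 2) ∨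
      (i.val = l + 3 ∧ j.val = l + 5))

/-- A member of the family `𝓕₃`: `A` is the path `0-1-2-3` (plus the edge `0-3` if
`c4 = true`, making it a 4-cycle) with non-pendant vertex `u = 2`, joined by a path with `l`
internal vertices `4,…,l+3` to the vertex `v = l+4` of the triangle `{l+4,l+5,l+6}`. -/
def F3Graph (c4 : Bool) (l : ℕ) : SimpleGraph (Fin (l + 7)) :=
  SimpleGraph.fromRel (fun i j =>
    (j.val = i.val + 1 ∧ i.val ≠ 3) ∨ (i.val = 2 ∧ j.val = 4) ∨
      (c4 = true ∧ i.val = 0 ∧ j.val = 3) ∨ (i.val = l + 4 ∧ j.val = l + 6))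

/-- A member of the family `𝓕₄`: paths `u₁(0)-u(1)-u₂(l+5+l')` and
`z₁(l+4+l')-z(l+3+l')-z₂(l+7+l')`, an edge `v(l+2)-v₁(l+6+l')`, with `u` joined to `v` by a
path through internal vertices `y₁(2),…,y_l(l+1)` and `v` joined to `z` by a path through
internal vertices `w₁(l+3),…,w_{l'}(l+2+l')`; if `e = 1` the extra edge `v₁ y_{l-1}` is
present, and if `e = 2` the extra edge `v₁ w₂` is present. -/
def F4Graph (l l' : ℕ) (e : Fin 3) : SimpleGraph (Fin (l + l' + 8)) :=
  SimpleGraph.fromRel (fun i j =>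
    (j.val = i.val + 1 ∧ j.val ≤ l + 4 + l') ∨ (i.val = 1 ∧ j.val = l + 5 + l') ∨
      (i.val = l + 2 ∧ j.val = l + 6 + l') ∨ (i.val = l + 3 + l' ∧ j.val = l + 7 + l') ∨
      (e = 1 ∧ i.val = l ∧ j.val = l + 6 + l') ∨
      (e = 2 ∧ i.val = l + 4 ∧ j.val = l + 6 + l'))

/-- A member of the family `𝓕₅`: `A` is the path `0-1-2-3` (plus edge `0-3` if `ac4 = true`)
with non-pendant vertex `u = 2`, `B` is the path `(l+5)-(l+4)-(l+6)-(l+7)` (plus edge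
`(l+5)-(l+7)` if `bc4 = true`) with non-pendant vertex `v = l+4`, and `u` is joined to `v`
by a path with `l` internal vertices `4,…,l+3`. -/
def F5Graph (ac4 bc4 : Bool) (l : ℕ) : SimpleGraph (Fin (l + 8)) :=
  SimpleGraph.fromRel (fun i j =>
    (j.val = i.val + 1 ∧ i.val ≠ 3 ∧ i.val ≠ l + 5) ∨ (i.val = 2 ∧ j.val = 4) ∨
      (i.val = l + 4 ∧ j.val = l + 6) ∨ (ac4 = true ∧ i.val = 0 ∧ j.val = 3) ∨
      (bc4 = true ∧ i.val = l + 5 ∧ j.val = l + 7))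

/-! ### Auxiliary general lemmas -/

private lemma walk_bound {V : Type*} {G : SimpleGraph V} (f : V → ℕ)
    (hf : ∀ a b, G.Adj a b → f a ≤ f b + 1 ∧ f b ≤ f a + 1) {u v : V} (p : G.Walk u v) :
    f u ≤ f v + p.length ∧ f v ≤ f u + p.length := by
  induction p with
  | nil => simp
  | cons h p ih =>
    have h2 := hf _ _ h
    simp only [SimpleGraph.Walk.length_cons]
    omega

private lemma edist_gt_of_gap {V : Type*} {G : SimpleGraph V} (f : V → ℕ)
    (hf : ∀ a b, G.Adj a b → f a ≤ f b + 1 ∧ f b ≤ f a + 1) {u v : V} (m : ℕ)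
    (h : f u + m < f v ∨ f v + m < f u) : (m : ℕ∞) < G.edist u v := by
  rw [← ENat.add_one_le_iff (by simp : (m:ℕ∞) ≠ ⊤)]
  refine le_iInf fun p => ?_
  have hb := walk_bound f hf p
  have hlen : m + 1 ≤ p.length := by omega
  exact_mod_cast Nat.cast_le.mpr hlen

private lemma one_lt_edist {V : Type*} {G : SimpleGraph V} {u v : V} (hne : u ≠ v)
    (hadj : ¬ G.Adj u v) : (1 : ℕ∞) < G.edist u v := by
  by_contra hc
  push_neg at hc
  have h1 : G.edist u v = 1 :=
    le_antisymm hc (Order.one_le_iff_pos.mpr (G.edist_pos_of_ne hne))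
  exact hadj (SimpleGraph.edist_eq_one_iff_adj.mp h1)

private lemma edist_le_two {V : Type*} {G : SimpleGraph V} {a b c : V}
    (h1 : G.Adj a b) (h2 : G.Adj b c) : G.edist a c ≤ 2 := by
  have ht := SimpleGraph.edist_triangle (G := G) (u := a) (v := b) (w := c)
  rw [SimpleGraph.edist_eq_one_iff_adj.mpr h1, SimpleGraph.edist_eq_one_iff_adj.mpr h2] at ht
  exact ht.trans_eq (by norm_num)

private lemma edist_le_three {V : Type*} {G : SimpleGraph V} {a b c d : V}
    (h1 : G.Adj a b) (h2 : G.Adj b c) (h3 : G.Adj c d) : G.edist a d ≤ 3 := by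
  have ht := SimpleGraph.edist_triangle (G := G) (u := a) (v := c) (w := d)
  rw [SimpleGraph.edist_eq_one_iff_adj.mpr h3] at ht
  have h4 := edist_le_two h1 h2
  calc G.edist a d ≤ G.edist a c + 1 := ht
  _ ≤ 2 + 1 := add_le_add_left h4 1
  _ = 3 := by norm_num

private lemma isPacking_of_cert {W : Type*} {H : SimpleGraph W} {c : W → ℕ} {K : ℕ} (f : W → ℕ)
    (hb : ∀ v, 1 ≤ c v ∧ c v ≤ K)
    (hlip : ∀ a b, H.Adj a b → f a ≤ f b + 1 ∧ f b ≤ f a + 1)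
    (h1 : ∀ a b, H.Adj a b → ¬(c a = 1 ∧ c b = 1))
    (hgap : ∀ a b, a ≠ b → c a = c b → 2 ≤ c a → f a + c a < f b ∨ f b + c a < f a) :
    IsPackingColoring H K c := by
  refine ⟨hb, fun u v hne hc => ?_⟩
  rcases Nat.lt_or_ge (c u) 2 with h | h
  · have hcu : c u = 1 := by have := (hb u).1; omega
    have hna : ¬ H.Adj u v := fun ha => h1 u v ha ⟨hcu, hc ▸ hcu⟩
    rw [hcu]
    exact_mod_cast one_lt_edist hne hna
  · exact edist_gt_of_gap f hlip (c u) (hgap u v hne hc h)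

/-! ### Arithmetic framework for `F5Graph` -/

private def fV (l i : ℕ) : ℕ :=
  if i = 3 then 1 else if i ≤ 2 then i else if i ≤ l + 4 then i - 1
  else if i = l + 7 then l + 5 else l + 4

private def posV (l t : ℕ) : ℕ := if t ≤ 2 then t else if t ≤ l + 3 then t + 1 else t + 2

private lemma fV_spec (l i : ℕ) (h : i < l + 8) :
    (i = 3 ∧ fV l i = 1) ∨ (i ≤ 2 ∧ fV l i = i) ∨
      (4 ≤ i ∧ i ≤ l + 4 ∧ fV l i = i - 1) ∨ (i = l + 5 ∧ fV l i = l + 4) ∨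
      (i = l + 6 ∧ fV l i = l + 4) ∨ (i = l + 7 ∧ fV l i = l + 5) := by
  unfold fV; split_ifs <;> omega

private lemma posV_spec (l t : ℕ) :
    (t ≤ 2 ∧ posV l t = t) ∨ (3 ≤ t ∧ t ≤ l + 3 ∧ posV l t = t + 1) ∨
      (l + 4 ≤ t ∧ posV l t = t + 2) := by
  unfold posV; split_ifs <;> omega

private def F5Rel (l a b : ℕ) : Prop :=
  (b = a + 1 ∧ a ≠ 3 ∧ a ≠ l + 5) ∨ (a = 2 ∧ b = 4) ∨ (a = l + 4 ∧ b = l + 6) ∨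
    (a = 0 ∧ b = 3) ∨ (a = l + 5 ∧ b = l + 7)

private lemma F5_adj_val {ac4 bc4 : Bool} {l : ℕ} {i j : Fin (l + 8)}
    (h : (F5Graph ac4 bc4 l).Adj i j) :
    i.val ≠ j.val ∧ (F5Rel l i.val j.val ∨ F5Rel l j.val i.val) := by
  rw [F5Graph, SimpleGraph.fromRel_adj] at h
  obtain ⟨hne, h⟩ := h
  refine ⟨fun hv => hne (Fin.ext hv), ?_⟩
  unfold F5Rel
  rcases h with (h|h|h|⟨_,h1,h2⟩|⟨_,h1,h2⟩) | (h|h|h|⟨_,h1,h2⟩|⟨_,h1,h2⟩)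
  · exact Or.inl (Or.inl h)
  · exact Or.inl (Or.inr (Or.inl h))
  · exact Or.inl (Or.inr (Or.inr (Or.inl h)))
  · exact Or.inl (Or.inr (Or.inr (Or.inr (Or.inl ⟨h1, h2⟩))))
  · exact Or.inl (Or.inr (Or.inr (Or.inr (Or.inr ⟨h1, h2⟩))))
  · exact Or.inr (Or.inl h)
  · exact Or.inr (Or.inr (Or.inl h))
  · exact Or.inr (Or.inr (Or.inr (Or.inl h)))
  · exact Or.inr (Or.inr (Or.inr (Or.inr (Or.inl ⟨h1, h2⟩))))
  · exact Or.inr (Or.inr (Or.inr (Or.inr (Or.inr ⟨h1, h2⟩))))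

private lemma F5_adj_of {ac4 bc4 : Bool} {l : ℕ} {i j : Fin (l + 8)}
    (h : (j.val = i.val + 1 ∧ i.val ≠ 3 ∧ i.val ≠ l + 5) ∨ (i.val = 2 ∧ j.val = 4) ∨
      (i.val = l + 4 ∧ j.val = l + 6)) : (F5Graph ac4 bc4 l).Adj i j := by
  rw [F5Graph, SimpleGraph.fromRel_adj]
  refine ⟨fun he => by rw [he] at h; omega, Or.inl ?_⟩
  rcases h with h|h|h
  · exact Or.inl h
  · exact Or.inr (Or.inl h)
  · exact Or.inr (Or.inr (Or.inl h))

private lemma fV_lip (l a b : ℕ) (ha : a < l + 8) (hb : b < l + 8) (h : F5Rel l a b) :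
    fV l a ≤ fV l b + 1 ∧ fV l b ≤ fV l a + 1 := by
  unfold F5Rel at h
  have h1 := fV_spec l a ha
  have h2 := fV_spec l b hb
  omega

/-! ### The colorings -/

private def cMain (l i : ℕ) : ℕ :=
  if i = 3 then 4 else if fV l i % 2 = 0 then 1 else if fV l i % 4 = 1 then 2 else 3

private def cD0 (l i : ℕ) : ℕ :=
  if fV l i % 2 = 0 then (if fV l i = 2 then 2 else 1)
  else if fV l i = 1 then 1 else if fV l i % 4 = 1 then 2 else 3

private def cD1 (l i : ℕ) : ℕ :=
  if fV l i % 2 = 0 then 1 else if fV l i % 4 = 1 then 3 else 2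

private def cD2 (l i : ℕ) : ℕ :=
  if fV l i % 2 = 0 then (if fV l i = 0 then 2 else 1)
  else if fV l i = 1 then 1 else if fV l i % 4 = 1 then 2 else 3

private def cD3 (l i : ℕ) : ℕ :=
  if fV l i % 2 = 0 then 1 else if fV l i % 4 = 1 then 2 else 3

private def cDM (l w i : ℕ) : ℕ :=
  if i < w then (if fV l i % 2 = 1 then 1 else if fV l i % 4 = 2 then 2 else 3)
  else (if fV l i % 2 = 0 then 1 else if fV l i % 4 = 3 then 2 else 3)

private def cDV (l i : ℕ) : ℕ :=
  if i ≤ l + 3 then (if fV l i % 2 = 1 then 1 else if fV l i % 4 = 2 then 2 else 3)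
  else if i = l + 7 then 2 else 1

private def cDP (l i : ℕ) : ℕ :=
  if fV l i % 2 = 1 then 1 else if fV l i % 4 = 2 then 2 else 3

private def cDZ (l i : ℕ) : ℕ :=
  if i = l + 4 then 2 else if i = l + 5 ∨ i = l + 6 then 1
  else if fV l i % 2 = 1 then 1 else if fV l i % 4 = (l + 2) % 4 then 3 else 2

private lemma cMain_spec (l i : ℕ) :
    1 ≤ cMain l i ∧ cMain l i ≤ 4 ∧ (cMain l i = 4 → i = 3) ∧
      (cMain l i = 1 → fV l i % 2 = 0 ∧ i ≠ 3) ∧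
      (cMain l i = 2 → fV l i % 4 = 1 ∧ i ≠ 3) ∧
      (cMain l i = 3 → fV l i % 4 = 3 ∧ i ≠ 3) := by
  unfold cMain; split_ifs <;> omega

private lemma cD0_spec (l i : ℕ) :
    1 ≤ cD0 l i ∧ cD0 l i ≤ 3 ∧
      (cD0 l i = 1 → (fV l i % 2 = 0 ∧ fV l i ≠ 2) ∨ fV l i = 1) ∧
      (cD0 l i = 2 → fV l i = 2 ∨ (fV l i % 4 = 1 ∧ fV l i ≠ 1)) ∧
      (cD0 l i = 3 → fV l i % 4 = 3) := by
  unfold cD0; split_ifs <;> omega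

private lemma cD1_spec (l i : ℕ) :
    1 ≤ cD1 l i ∧ cD1 l i ≤ 3 ∧
      (cD1 l i = 1 → fV l i % 2 = 0) ∧
      (cD1 l i = 2 → fV l i % 4 = 3) ∧
      (cD1 l i = 3 → fV l i % 4 = 1) := by
  unfold cD1; split_ifs <;> omega

private lemma cD2_spec (l i : ℕ) :
    1 ≤ cD2 l i ∧ cD2 l i ≤ 3 ∧
      (cD2 l i = 1 → (fV l i % 2 = 0 ∧ fV l i ≠ 0) ∨ fV l i = 1) ∧
      (cD2 l i = 2 → fV l i = 0 ∨ (fV l i % 4 = 1 ∧ fV l i ≠ 1)) ∧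
      (cD2 l i = 3 → fV l i % 4 = 3) := by
  unfold cD2; split_ifs <;> omega

private lemma cD3_spec (l i : ℕ) :
    1 ≤ cD3 l i ∧ cD3 l i ≤ 3 ∧
      (cD3 l i = 1 → fV l i % 2 = 0) ∧
      (cD3 l i = 2 → fV l i % 4 = 1) ∧
      (cD3 l i = 3 → fV l i % 4 = 3) := by
  unfold cD3; split_ifs <;> omega

private lemma cDM_spec (l w i : ℕ) :
    1 ≤ cDM l w i ∧ cDM l w i ≤ 3 ∧
      (cDM l w i = 1 → (i < w ∧ fV l i % 2 = 1) ∨ (¬ i < w ∧ fV l i % 2 = 0)) ∧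
      (cDM l w i = 2 → (i < w ∧ fV l i % 4 = 2) ∨ (¬ i < w ∧ fV l i % 4 = 3)) ∧
      (cDM l w i = 3 → (i < w ∧ fV l i % 4 = 0) ∨ (¬ i < w ∧ fV l i % 4 = 1)) := by
  unfold cDM; split_ifs <;> omega

private lemma cDV_spec (l i : ℕ) :
    1 ≤ cDV l i ∧ cDV l i ≤ 3 ∧
      (cDV l i = 1 → (i ≤ l + 3 ∧ fV l i % 2 = 1) ∨ (l + 4 ≤ i ∧ i ≠ l + 7)) ∧
      (cDV l i = 2 → (i ≤ l + 3 ∧ fV l i % 4 = 2) ∨ i = l + 7) ∧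
      (cDV l i = 3 → i ≤ l + 3 ∧ fV l i % 4 = 0) := by
  unfold cDV; split_ifs <;> omega

private lemma cDP_spec (l i : ℕ) :
    1 ≤ cDP l i ∧ cDP l i ≤ 3 ∧
      (cDP l i = 1 → fV l i % 2 = 1) ∧
      (cDP l i = 2 → fV l i % 4 = 2) ∧
      (cDP l i = 3 → fV l i % 4 = 0) := by
  unfold cDP; split_ifs <;> omega

private lemma cDZ_spec (l i : ℕ) (hl : l % 2 = 0) :
    1 ≤ cDZ l i ∧ cDZ l i ≤ 3 ∧
      (cDZ l i = 1 → i = l + 5 ∨ i = l + 6 ∨ (fV l i % 2 = 1 ∧ i ≠ l + 4)) ∧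
      (cDZ l i = 2 → i = l + 4 ∨
        (fV l i % 2 = 0 ∧ fV l i % 4 = l % 4 ∧ i ≠ l + 5 ∧ i ≠ l + 6)) ∧
      (cDZ l i = 3 → fV l i % 4 = (l + 2) % 4 ∧ i ≠ l + 4 ∧ i ≠ l + 5 ∧ i ≠ l + 6) := by
  unfold cDZ; split_ifs <;> omega

/-! ### Arithmetic obligations for the main coloring -/

private lemma cMain_h1 (l a b : ℕ) (hl : l % 2 = 0) (ha : a < l + 8) (hb : b < l + 8)
    (hr : F5Rel l a b ∨ F5Rel l b a) (e1 : cMain l a = 1) (e2 : cMain l b = 1) : False := by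
  have d1 := (cMain_spec l a).2.2.2.1 e1
  have d2 := (cMain_spec l b).2.2.2.1 e2
  have f1 := fV_spec l a ha
  have f2 := fV_spec l b hb
  unfold F5Rel at hr
  omega

private lemma cMain_gap (l a b : ℕ) (hl : l % 2 = 0) (ha : a < l + 8) (hb : b < l + 8)
    (hne : a ≠ b) (he : cMain l a = cMain l b) (h2 : 2 ≤ cMain l a) :
    fV l a + cMain l a < fV l b ∨ fV l b + cMain l a < fV l a := by
  have hb4 := (cMain_spec l a).2.1
  rcases (by omega : cMain l a = 2 ∨ cMain l a = 3 ∨ cMain l a = 4) with e | e | e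
  · have d1 := (cMain_spec l a).2.2.2.2.1 e
    have d2 := (cMain_spec l b).2.2.2.2.1 (he ▸ e)
    have f1 := fV_spec l a ha
    have f2 := fV_spec l b hb
    rw [e]
    omega
  · have d1 := (cMain_spec l a).2.2.2.2.2 e
    have d2 := (cMain_spec l b).2.2.2.2.2 (he ▸ e)
    have f1 := fV_spec l a ha
    have f2 := fV_spec l b hb
    rw [e]
    omega
  · have d1 := (cMain_spec l a).2.2.1 e
    have d2 := (cMain_spec l b).2.2.1 (he ▸ e)
    omega

/-! ### Packing colorings from arithmetic certificates -/

private lemma F5_chi4_mem (ac4 bc4 : Bool) (l : ℕ) (hl : l % 2 = 0) :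
    ∃ c, IsPackingColoring (F5Graph ac4 bc4 l) 4 c := by
  refine ⟨fun x => cMain l x.val, isPacking_of_cert (f := fun x => fV l x.val) ?_ ?_ ?_ ?_⟩
  · intro v
    have := cMain_spec l v.val
    omega
  · intro a b hab
    rcases (F5_adj_val hab).2 with h | h
    · exact fV_lip l a.val b.val a.isLt b.isLt h
    · exact (fV_lip l b.val a.val b.isLt a.isLt h).symm
  · intro a b hab hcc
    exact cMain_h1 l a.val b.val hl a.isLt b.isLt (F5_adj_val hab).2 hcc.1 hcc.2
  · intro a b hne he h2
    exact cMain_gap l a.val b.val hl a.isLt b.isLt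
      (fun hv => hne (Fin.ext hv)) he h2

private lemma F5_del_lt (ac4 bc4 : Bool) (l : ℕ) (w : Fin (l + 8)) (c : ℕ → ℕ)
    (hbnd : ∀ i, i < l + 8 → 1 ≤ c i ∧ c i ≤ 3)
    (h1 : ∀ a b, a < l + 8 → b < l + 8 → a ≠ w.val → b ≠ w.val →
      (F5Rel l a b ∨ F5Rel l b a) → ¬(c a = 1 ∧ c b = 1))
    (hgap : ∀ a b, a < l + 8 → b < l + 8 → a ≠ w.val → b ≠ w.val → a ≠ b → c a = c b →
      2 ≤ c a → fV l a + c a < fV l b ∨ fV l b + c a < fV l a) :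
    packingChromaticNumber ((F5Graph ac4 bc4 l).induce ({w}ᶜ : Set (Fin (l + 8)))) < 4 := by
  have hvne : ∀ x : ↥({w}ᶜ : Set (Fin (l + 8))), x.val.val ≠ w.val := by
    intro x hx
    have h2 := x.2
    rw [Set.mem_compl_iff, Set.mem_singleton_iff] at h2
    exact h2 (Fin.ext hx)
  have hadj : ∀ a b : ↥({w}ᶜ : Set (Fin (l + 8))),
      ((F5Graph ac4 bc4 l).induce ({w}ᶜ : Set (Fin (l + 8)))).Adj a b →
      (F5Graph ac4 bc4 l).Adj a.val b.val := fun a b h => h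
  have hmem : (3:ℕ) ∈ {K | ∃ c' : ↥({w}ᶜ : Set (Fin (l + 8))) → ℕ,
      IsPackingColoring ((F5Graph ac4 bc4 l).induce ({w}ᶜ : Set (Fin (l + 8)))) K c'} := by
    refine ⟨fun x => c x.val.val,
      isPacking_of_cert (f := fun x => fV l x.val.val) ?_ ?_ ?_ ?_⟩
    · exact fun v => hbnd _ v.val.isLt
    · intro a b hab
      rcases (F5_adj_val (hadj a b hab)).2 with h | h
      · exact fV_lip l a.val.val b.val.val a.val.isLt b.val.isLt h
      · exact (fV_lip l b.val.val a.val.val b.val.isLt a.val.isLt h).symm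
    · intro a b hab hcc
      exact h1 a.val.val b.val.val a.val.isLt b.val.isLt (hvne a) (hvne b)
        (F5_adj_val (hadj a b hab)).2 hcc
    · intro a b hne he h2
      exact hgap a.val.val b.val.val a.val.isLt b.val.isLt (hvne a) (hvne b)
        (fun hv => hne (Subtype.ext (Fin.ext hv))) he h2
  have hle : packingChromaticNumber
      ((F5Graph ac4 bc4 l).induce ({w}ᶜ : Set (Fin (l + 8)))) ≤ 3 := Nat.sInf_le hmem
  omega

private lemma cD0_h1 (l a b : ℕ) (hl : l % 2 = 0) (ha : a < l + 8) (hb : b < l + 8)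
    (hwa : a ≠ 0) (hwb : b ≠ 0)
    (hr : F5Rel l a b ∨ F5Rel l b a) (hcc : cD0 l a = 1 ∧ cD0 l b = 1) : False := by
  have d1 := (cD0_spec l a).2.2.1 hcc.1
  have d2 := (cD0_spec l b).2.2.1 hcc.2
  have f1 := fV_spec l a ha
  have f2 := fV_spec l b hb
  unfold F5Rel at hr
  omega

private lemma cD0_gap (l a b : ℕ) (hl : l % 2 = 0) (ha : a < l + 8) (hb : b < l + 8)
    (hwa : a ≠ 0) (hwb : b ≠ 0) (hne : a ≠ b) (he : cD0 l a = cD0 l b)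
    (h2 : 2 ≤ cD0 l a) :
    fV l a + cD0 l a < fV l b ∨ fV l b + cD0 l a < fV l a := by
  have hb3 := (cD0_spec l a).2.1
  rcases (by omega : cD0 l a = 2 ∨ cD0 l a = 3) with e | e
  · have d1 := (cD0_spec l a).2.2.2.1 e
    have d2 := (cD0_spec l b).2.2.2.1 (he ▸ e)
    have f1 := fV_spec l a ha
    have f2 := fV_spec l b hb
    rw [e]
    omega
  · have d1 := (cD0_spec l a).2.2.2.2 e
    have d2 := (cD0_spec l b).2.2.2.2 (he ▸ e)
    have f1 := fV_spec l a ha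
    have f2 := fV_spec l b hb
    rw [e]
    omega

private lemma cD1_h1 (l a b : ℕ) (hl : l % 2 = 0) (ha : a < l + 8) (hb : b < l + 8)
    (hwa : a ≠ 1) (hwb : b ≠ 1)
    (hr : F5Rel l a b ∨ F5Rel l b a) (hcc : cD1 l a = 1 ∧ cD1 l b = 1) : False := by
  have d1 := (cD1_spec l a).2.2.1 hcc.1
  have d2 := (cD1_spec l b).2.2.1 hcc.2
  have f1 := fV_spec l a ha
  have f2 := fV_spec l b hb
  unfold F5Rel at hr
  omega

private lemma cD1_gap (l a b : ℕ) (hl : l % 2 = 0) (ha : a < l + 8) (hb : b < l + 8)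
    (hwa : a ≠ 1) (hwb : b ≠ 1) (hne : a ≠ b) (he : cD1 l a = cD1 l b)
    (h2 : 2 ≤ cD1 l a) :
    fV l a + cD1 l a < fV l b ∨ fV l b + cD1 l a < fV l a := by
  have hb3 := (cD1_spec l a).2.1
  rcases (by omega : cD1 l a = 2 ∨ cD1 l a = 3) with e | e
  · have d1 := (cD1_spec l a).2.2.2.1 e
    have d2 := (cD1_spec l b).2.2.2.1 (he ▸ e)
    have f1 := fV_spec l a ha
    have f2 := fV_spec l b hb
    rw [e]
    omega
  · have d1 := (cD1_spec l a).2.2.2.2 e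
    have d2 := (cD1_spec l b).2.2.2.2 (he ▸ e)
    have f1 := fV_spec l a ha
    have f2 := fV_spec l b hb
    rw [e]
    omega

private lemma cD2_h1 (l a b : ℕ) (hl : l % 2 = 0) (ha : a < l + 8) (hb : b < l + 8)
    (hwa : a ≠ 2) (hwb : b ≠ 2)
    (hr : F5Rel l a b ∨ F5Rel l b a) (hcc : cD2 l a = 1 ∧ cD2 l b = 1) : False := by
  have d1 := (cD2_spec l a).2.2.1 hcc.1
  have d2 := (cD2_spec l b).2.2.1 hcc.2
  have f1 := fV_spec l a ha
  have f2 := fV_spec l b hb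
  unfold F5Rel at hr
  omega

private lemma cD2_gap (l a b : ℕ) (hl : l % 2 = 0) (ha : a < l + 8) (hb : b < l + 8)
    (hwa : a ≠ 2) (hwb : b ≠ 2) (hne : a ≠ b) (he : cD2 l a = cD2 l b)
    (h2 : 2 ≤ cD2 l a) :
    fV l a + cD2 l a < fV l b ∨ fV l b + cD2 l a < fV l a := by
  have hb3 := (cD2_spec l a).2.1
  rcases (by omega : cD2 l a = 2 ∨ cD2 l a = 3) with e | e
  · have d1 := (cD2_spec l a).2.2.2.1 e
    have d2 := (cD2_spec l b).2.2.2.1 (he ▸ e)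
    have f1 := fV_spec l a ha
    have f2 := fV_spec l b hb
    rw [e]
    omega
  · have d1 := (cD2_spec l a).2.2.2.2 e
    have d2 := (cD2_spec l b).2.2.2.2 (he ▸ e)
    have f1 := fV_spec l a ha
    have f2 := fV_spec l b hb
    rw [e]
    omega

private lemma cD3_h1 (l a b : ℕ) (hl : l % 2 = 0) (ha : a < l + 8) (hb : b < l + 8)
    (hwa : a ≠ 3) (hwb : b ≠ 3)
    (hr : F5Rel l a b ∨ F5Rel l b a) (hcc : cD3 l a = 1 ∧ cD3 l b = 1) : False := by
  have d1 := (cD3_spec l a).2.2.1 hcc.1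
  have d2 := (cD3_spec l b).2.2.1 hcc.2
  have f1 := fV_spec l a ha
  have f2 := fV_spec l b hb
  unfold F5Rel at hr
  omega

private lemma cD3_gap (l a b : ℕ) (hl : l % 2 = 0) (ha : a < l + 8) (hb : b < l + 8)
    (hwa : a ≠ 3) (hwb : b ≠ 3) (hne : a ≠ b) (he : cD3 l a = cD3 l b)
    (h2 : 2 ≤ cD3 l a) :
    fV l a + cD3 l a < fV l b ∨ fV l b + cD3 l a < fV l a := by
  have hb3 := (cD3_spec l a).2.1
  rcases (by omega : cD3 l a = 2 ∨ cD3 l a = 3) with e | e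
  · have d1 := (cD3_spec l a).2.2.2.1 e
    have d2 := (cD3_spec l b).2.2.2.1 (he ▸ e)
    have f1 := fV_spec l a ha
    have f2 := fV_spec l b hb
    rw [e]
    omega
  · have d1 := (cD3_spec l a).2.2.2.2 e
    have d2 := (cD3_spec l b).2.2.2.2 (he ▸ e)
    have f1 := fV_spec l a ha
    have f2 := fV_spec l b hb
    rw [e]
    omega

private lemma cDM_h1 (l w a b : ℕ) (hl : l % 2 = 0) (ha : a < l + 8) (hb : b < l + 8)
    (h4 : 4 ≤ w) (hw : w ≤ l + 3) (hwa : a ≠ w) (hwb : b ≠ w)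
    (hr : F5Rel l a b ∨ F5Rel l b a) (hcc : cDM l w a = 1 ∧ cDM l w b = 1) : False := by
  have d1 := (cDM_spec l w a).2.2.1 hcc.1
  have d2 := (cDM_spec l w b).2.2.1 hcc.2
  have f1 := fV_spec l a ha
  have f2 := fV_spec l b hb
  unfold F5Rel at hr
  omega

private lemma cDM_gap (l w a b : ℕ) (hl : l % 2 = 0) (ha : a < l + 8) (hb : b < l + 8)
    (h4 : 4 ≤ w) (hw : w ≤ l + 3) (hwa : a ≠ w) (hwb : b ≠ w) (hne : a ≠ b) (he : cDM l w a = cDM l w b)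
    (h2 : 2 ≤ cDM l w a) :
    fV l a + cDM l w a < fV l b ∨ fV l b + cDM l w a < fV l a := by
  have hb3 := (cDM_spec l w a).2.1
  rcases (by omega : cDM l w a = 2 ∨ cDM l w a = 3) with e | e
  · have d1 := (cDM_spec l w a).2.2.2.1 e
    have d2 := (cDM_spec l w b).2.2.2.1 (he ▸ e)
    have f1 := fV_spec l a ha
    have f2 := fV_spec l b hb
    rw [e]
    omega
  · have d1 := (cDM_spec l w a).2.2.2.2 e
    have d2 := (cDM_spec l w b).2.2.2.2 (he ▸ e)
    have f1 := fV_spec l a ha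
    have f2 := fV_spec l b hb
    rw [e]
    omega

private lemma cDV_h1 (l a b : ℕ) (hl : l % 2 = 0) (ha : a < l + 8) (hb : b < l + 8)
    (hwa : a ≠ l + 4) (hwb : b ≠ l + 4)
    (hr : F5Rel l a b ∨ F5Rel l b a) (hcc : cDV l a = 1 ∧ cDV l b = 1) : False := by
  have d1 := (cDV_spec l a).2.2.1 hcc.1
  have d2 := (cDV_spec l b).2.2.1 hcc.2
  have f1 := fV_spec l a ha
  have f2 := fV_spec l b hb
  unfold F5Rel at hr
  omega

private lemma cDV_gap (l a b : ℕ) (hl : l % 2 = 0) (ha : a < l + 8) (hb : b < l + 8)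
    (hwa : a ≠ l + 4) (hwb : b ≠ l + 4) (hne : a ≠ b) (he : cDV l a = cDV l b)
    (h2 : 2 ≤ cDV l a) :
    fV l a + cDV l a < fV l b ∨ fV l b + cDV l a < fV l a := by
  have hb3 := (cDV_spec l a).2.1
  rcases (by omega : cDV l a = 2 ∨ cDV l a = 3) with e | e
  · have d1 := (cDV_spec l a).2.2.2.1 e
    have d2 := (cDV_spec l b).2.2.2.1 (he ▸ e)
    have f1 := fV_spec l a ha
    have f2 := fV_spec l b hb
    rw [e]
    omega
  · have d1 := (cDV_spec l a).2.2.2.2 e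
    have d2 := (cDV_spec l b).2.2.2.2 (he ▸ e)
    have f1 := fV_spec l a ha
    have f2 := fV_spec l b hb
    rw [e]
    omega

private lemma cDP_h1 (l w a b : ℕ) (hl : l % 2 = 0) (ha : a < l + 8) (hb : b < l + 8)
    (h5 : l + 5 ≤ w) (hw : w ≤ l + 6) (hwa : a ≠ w) (hwb : b ≠ w)
    (hr : F5Rel l a b ∨ F5Rel l b a) (hcc : cDP l a = 1 ∧ cDP l b = 1) : False := by
  have d1 := (cDP_spec l a).2.2.1 hcc.1
  have d2 := (cDP_spec l b).2.2.1 hcc.2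
  have f1 := fV_spec l a ha
  have f2 := fV_spec l b hb
  unfold F5Rel at hr
  omega

private lemma cDP_gap (l w a b : ℕ) (hl : l % 2 = 0) (ha : a < l + 8) (hb : b < l + 8)
    (h5 : l + 5 ≤ w) (hw : w ≤ l + 6) (hwa : a ≠ w) (hwb : b ≠ w) (hne : a ≠ b) (he : cDP l a = cDP l b)
    (h2 : 2 ≤ cDP l a) :
    fV l a + cDP l a < fV l b ∨ fV l b + cDP l a < fV l a := by
  have hb3 := (cDP_spec l a).2.1
  rcases (by omega : cDP l a = 2 ∨ cDP l a = 3) with e | e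
  · have d1 := (cDP_spec l a).2.2.2.1 e
    have d2 := (cDP_spec l b).2.2.2.1 (he ▸ e)
    have f1 := fV_spec l a ha
    have f2 := fV_spec l b hb
    rw [e]
    omega
  · have d1 := (cDP_spec l a).2.2.2.2 e
    have d2 := (cDP_spec l b).2.2.2.2 (he ▸ e)
    have f1 := fV_spec l a ha
    have f2 := fV_spec l b hb
    rw [e]
    omega

private lemma cDZ_h1 (l a b : ℕ) (hl : l % 2 = 0) (ha : a < l + 8) (hb : b < l + 8)
    (hwa : a ≠ l + 7) (hwb : b ≠ l + 7)
    (hr : F5Rel l a b ∨ F5Rel l b a) (hcc : cDZ l a = 1 ∧ cDZ l b = 1) : False := by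
  have d1 := (cDZ_spec l a hl).2.2.1 hcc.1
  have d2 := (cDZ_spec l b hl).2.2.1 hcc.2
  have f1 := fV_spec l a ha
  have f2 := fV_spec l b hb
  unfold F5Rel at hr
  omega

private lemma cDZ_gap (l a b : ℕ) (hl : l % 2 = 0) (ha : a < l + 8) (hb : b < l + 8)
    (hwa : a ≠ l + 7) (hwb : b ≠ l + 7) (hne : a ≠ b) (he : cDZ l a = cDZ l b)
    (h2 : 2 ≤ cDZ l a) :
    fV l a + cDZ l a < fV l b ∨ fV l b + cDZ l a < fV l a := by
  have hb3 := (cDZ_spec l a hl).2.1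
  rcases (by omega : cDZ l a = 2 ∨ cDZ l a = 3) with e | e
  · have d1 := (cDZ_spec l a hl).2.2.2.1 e
    have d2 := (cDZ_spec l b hl).2.2.2.1 (he ▸ e)
    have f1 := fV_spec l a ha
    have f2 := fV_spec l b hb
    rw [e]
    omega
  · have d1 := (cDZ_spec l a hl).2.2.2.2 e
    have d2 := (cDZ_spec l b hl).2.2.2.2 (he ▸ e)
    have f1 := fV_spec l a ha
    have f2 := fV_spec l b hb
    rw [e]
    omega

private lemma F5_no3 (ac4 bc4 : Bool) (l k : ℕ) (hlk : l = 2 * k)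
    (c : Fin (l + 8) → ℕ) (hc : IsPackingColoring (F5Graph ac4 bc4 l) 3 c) : False := by
  obtain ⟨hbnd, hp⟩ := hc
  -- basic consequences of being a 3-packing coloring
  have tne : ∀ a b : Fin (l + 8), (F5Graph ac4 bc4 l).Adj a b → c a ≠ c b := by
    intro a b hadj he
    have h1 := hp a b hadj.ne he
    rw [SimpleGraph.edist_eq_one_iff_adj.mpr hadj] at h1
    have h0 : c a < 1 := by exact_mod_cast h1
    have := (hbnd a).1; omega
  have td2 : ∀ a b : Fin (l + 8), a ≠ b → (F5Graph ac4 bc4 l).edist a b ≤ 2 →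
      c a = c b → c a = 1 := by
    intro a b hne hd he
    have h1 := hp a b hne he
    have h2 : c a < 2 := by exact_mod_cast lt_of_lt_of_le h1 hd
    have := (hbnd a).1; omega
  have td3 : ∀ a b : Fin (l + 8), a ≠ b → (F5Graph ac4 bc4 l).edist a b ≤ 3 →
      c a = c b → c a ≤ 2 := by
    intro a b hne hd he
    have h1 := hp a b hne he
    have h2 : c a < 3 := by exact_mod_cast lt_of_lt_of_le h1 hd
    omega
  -- the geodesic path
  have poslt : ∀ t, t ≤ l + 5 → posV l t < l + 8 := by
    intro t ht; have := posV_spec l t; omega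
  set P : ℕ → Fin (l + 8) := fun t => ⟨posV l t % (l + 8), Nat.mod_lt _ (by omega)⟩ with hP
  have P_val : ∀ t, t ≤ l + 5 → (P t).val = posV l t := by
    intro t ht
    show posV l t % (l + 8) = posV l t
    exact Nat.mod_eq_of_lt (poslt t ht)
  have cP : ∀ t t', t = t' → c (P t) = c (P t') := by
    intro t t' h; rw [h]
  have adjv : ∀ (a b : ℕ) (ha : a < l + 8) (hb : b < l + 8),
      ((b = a + 1 ∧ a ≠ 3 ∧ a ≠ l + 5) ∨ (a = 2 ∧ b = 4) ∨ (a = l + 4 ∧ b = l + 6)) →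
      (F5Graph ac4 bc4 l).Adj ⟨a, ha⟩ ⟨b, hb⟩ := fun a b ha hb h => F5_adj_of h
  have P_eq : ∀ t (ht : t ≤ l + 5), P t = ⟨posV l t, poslt t ht⟩ := by
    intro t ht; exact Fin.ext (P_val t ht)
  have adjP : ∀ t t', t' = t + 1 → t' ≤ l + 5 →
      (F5Graph ac4 bc4 l).Adj (P t) (P t') := by
    intro t t' h h5
    rw [P_eq t (by omega), P_eq t' h5]
    apply adjv
    have q1 := posV_spec l t
    have q2 := posV_spec l t'
    omega
  have adjPQ : ∀ t (m : ℕ) (ht : t ≤ l + 5) (hm : m < l + 8),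
      ((m = posV l t + 1 ∧ posV l t ≠ 3 ∧ posV l t ≠ l + 5) ∨ (posV l t = 2 ∧ m = 4) ∨
        (posV l t = l + 4 ∧ m = l + 6)) →
      (F5Graph ac4 bc4 l).Adj (P t) ⟨m, hm⟩ := by
    intro t m ht hm h
    rw [P_eq t ht]
    exact adjv _ _ _ _ h
  have Pne : ∀ t t' (ht : t ≤ l + 5) (ht' : t' ≤ l + 5), posV l t ≠ posV l t' →
      P t ≠ P t' := by
    intro t t' ht ht' h he
    have := congrArg Fin.val he
    rw [P_val t ht, P_val t' ht'] at this
    exact h this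
  have PneQ : ∀ t (m : ℕ) (ht : t ≤ l + 5) (hm : m < l + 8), posV l t ≠ m →
      P t ≠ ⟨m, hm⟩ := by
    intro t m ht hm h he
    have := congrArg Fin.val he
    rw [P_val t ht] at this
    exact h this
  have dP2 : ∀ t t', t' = t + 2 → t' ≤ l + 5 →
      (F5Graph ac4 bc4 l).edist (P t) (P t') ≤ 2 := by
    intro t t' h h5
    exact edist_le_two (adjP t (t+1) rfl (by omega)) (adjP (t+1) t' (by omega) h5)
  have dP3 : ∀ t t', t' = t + 3 → t' ≤ l + 5 →
      (F5Graph ac4 bc4 l).edist (P t) (P t') ≤ 3 := by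
    intro t t' h h5
    exact edist_le_three (adjP t (t+1) rfl (by omega)) (adjP (t+1) (t+2) rfl (by omega))
      (adjP (t+2) t' (by omega) h5)
  -- the alternation lemma
  have ONE : ∀ s, s + 3 ≤ l + 3 → c (P (s + 2)) = 1 ∨ c (P (s + 3)) = 1 := by
    intro s hs
    by_contra hcon
    push_neg at hcon
    obtain ⟨h2, h3⟩ := hcon
    have a23 := adjP (s+2) (s+3) (by omega) (by omega)
    have hd23 := tne _ _ a23
    have b2 := hbnd (P (s+2))
    have b3 := hbnd (P (s+3))
    rcases (by omega : (c (P (s+2)) = 2 ∧ c (P (s+3)) = 3) ∨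
        (c (P (s+2)) = 3 ∧ c (P (s+3)) = 2)) with ⟨e2, e3⟩ | ⟨e2, e3⟩
    · have a12 := adjP (s+1) (s+2) (by omega) (by omega)
      have a01 := adjP s (s+1) (by omega) (by omega)
      have c1ne2 := tne _ _ a12
      have q0 := posV_spec l s
      have q1 := posV_spec l (s+1)
      have q2 := posV_spec l (s+2)
      have q3 := posV_spec l (s+3)
      have i13 : c (P (s+1)) = c (P (s+3)) → c (P (s+1)) = 1 :=
        td2 _ _ (Pne (s+1) (s+3) (by omega) (by omega) (by omega))
          (dP2 (s+1) (s+3) (by omega) (by omega))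
      have b1 := hbnd (P (s+1))
      have hc1 : c (P (s+1)) = 1 := by omega
      have c0ne1 := tne _ _ a01
      have i02 : c (P s) = c (P (s+2)) → c (P s) = 1 :=
        td2 _ _ (Pne s (s+2) (by omega) (by omega) (by omega))
          (dP2 s (s+2) (by omega) (by omega))
      have i03 : c (P s) = c (P (s+3)) → c (P s) ≤ 2 :=
        td3 _ _ (Pne s (s+3) (by omega) (by omega) (by omega))
          (dP3 s (s+3) (by omega) (by omega))
      have b0 := hbnd (P s)
      omega
    · have a34 := adjP (s+3) (s+4) (by omega) (by omega)
      have a45 := adjP (s+4) (s+5) (by omega) (by omega)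
      have c4ne2 := tne _ _ a34
      have q2 := posV_spec l (s+2)
      have q3 := posV_spec l (s+3)
      have q4 := posV_spec l (s+4)
      have q5 := posV_spec l (s+5)
      have i24 : c (P (s+2)) = c (P (s+4)) → c (P (s+2)) = 1 :=
        td2 _ _ (Pne (s+2) (s+4) (by omega) (by omega) (by omega))
          (dP2 (s+2) (s+4) (by omega) (by omega))
      have b4 := hbnd (P (s+4))
      have hc4 : c (P (s+4)) = 1 := by omega
      have c5ne1 := tne _ _ a45
      have i35 : c (P (s+3)) = c (P (s+5)) → c (P (s+3)) = 1 :=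
        td2 _ _ (Pne (s+3) (s+5) (by omega) (by omega) (by omega))
          (dP2 (s+3) (s+5) (by omega) (by omega))
      have i25 : c (P (s+2)) = c (P (s+5)) → c (P (s+2)) ≤ 2 :=
        td3 _ _ (Pne (s+2) (s+5) (by omega) (by omega) (by omega))
          (dP3 (s+2) (s+5) (by omega) (by omega))
      have b5 := hbnd (P (s+5))
      omega
  -- endgame at A
  by_cases hu : c (P 2) = 1
  · have q1 := posV_spec l 1
    have q2 := posV_spec l 2
    have q3 := posV_spec l 3
    have a12 := adjP 1 2 (by omega) (by omega)
    have a23 := adjP 2 3 (by omega) (by omega)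
    have aU3 : (F5Graph ac4 bc4 l).Adj (P 2) ⟨3, by omega⟩ :=
      adjPQ 2 3 (by omega) (by omega) (by omega)
    have cy1 : c (P 1) ≠ 1 := fun he => tne _ _ a12 (he.trans hu.symm)
    have cy4 : c (P 3) ≠ 1 := fun he => tne _ _ a23 (hu.trans he.symm)
    have cy3 : c (⟨3, by omega⟩ : Fin (l+8)) ≠ 1 := fun he => tne _ _ aU3 (hu.trans he.symm)
    have i14 : c (P 1) = c (P 3) → c (P 1) = 1 :=
      td2 _ _ (Pne 1 3 (by omega) (by omega) (by omega)) (dP2 1 3 (by omega) (by omega))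
    have i13 : c (P 1) = c (⟨3, by omega⟩ : Fin (l+8)) → c (P 1) = 1 :=
      td2 _ _ (PneQ 1 3 (by omega) (by omega) (by omega)) (edist_le_two a12 aU3)
    have i34 : c (⟨3, by omega⟩ : Fin (l+8)) = c (P 3) →
        c (⟨3, by omega⟩ : Fin (l+8)) = 1 :=
      td2 _ _ (fun he => (PneQ 3 3 (by omega) (by omega) (by omega)) he.symm)
        (edist_le_two aU3.symm a23)
    have b1 := hbnd (P 1)
    have b3 := hbnd (⟨3, by omega⟩ : Fin (l+8))
    have b4 := hbnd (P 3)
    omega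
  by_cases hv : c (P (l + 3)) = 1
  · -- endgame at B
    have q1 := posV_spec l (l+2)
    have q2 := posV_spec l (l+3)
    have q3 := posV_spec l (l+4)
    have a12 := adjP (l+2) (l+3) (by omega) (by omega)
    have a23 := adjP (l+3) (l+4) (by omega) (by omega)
    have aV5 : (F5Graph ac4 bc4 l).Adj (P (l+3)) ⟨l+5, by omega⟩ :=
      adjPQ (l+3) (l+5) (by omega) (by omega) (by omega)
    have cy1 : c (P (l+2)) ≠ 1 := fun he => tne _ _ a12 (he.trans hv.symm)
    have cy4 : c (P (l+4)) ≠ 1 := fun he => tne _ _ a23 (hv.trans he.symm)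
    have cy3 : c (⟨l+5, by omega⟩ : Fin (l+8)) ≠ 1 := fun he => tne _ _ aV5 (hv.trans he.symm)
    have i14 : c (P (l+2)) = c (P (l+4)) → c (P (l+2)) = 1 :=
      td2 _ _ (Pne (l+2) (l+4) (by omega) (by omega) (by omega))
        (dP2 (l+2) (l+4) (by omega) (by omega))
    have i13 : c (P (l+2)) = c (⟨l+5, by omega⟩ : Fin (l+8)) → c (P (l+2)) = 1 :=
      td2 _ _ (PneQ (l+2) (l+5) (by omega) (by omega) (by omega)) (edist_le_two a12 aV5)
    have i34 : c (⟨l+5, by omega⟩ : Fin (l+8)) = c (P (l+4)) →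
        c (⟨l+5, by omega⟩ : Fin (l+8)) = 1 :=
      td2 _ _ (fun he => (PneQ (l+4) (l+5) (by omega) (by omega) (by omega)) he.symm)
        (edist_le_two aV5.symm a23)
    have b1 := hbnd (P (l+2))
    have b3 := hbnd (⟨l+5, by omega⟩ : Fin (l+8))
    have b4 := hbnd (P (l+4))
    omega
  -- the parity chain
  have start : c (P 3) = 1 := by
    rcases ONE 0 (by omega) with h | h
    · exact absurd ((cP 2 (0+2) (by omega)).trans h) hu
    · exact (cP 3 (0+3) (by omega)).trans h
  have chain : ∀ j, j ≤ k → c (P (3 + 2 * j)) = 1 := by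
    intro j
    induction j with
    | zero => intro _; exact (cP (3 + 2 * 0) 3 (by omega)).trans start
    | succ n ih =>
      intro hn
      have h1 := ih (by omega)
      have hadj := adjP (3 + 2 * n) (3 + 2 * n + 1) rfl (by omega)
      have h2 : c (P (3 + 2 * n + 1)) ≠ 1 := fun he => tne _ _ hadj (h1.trans he.symm)
      rcases ONE (2 * n + 2) (by omega) with h3 | h3
      · exact absurd ((cP (3 + 2 * n + 1) (2 * n + 2 + 2) (by omega)).trans h3) h2
      · exact (cP (3 + 2 * (n + 1)) (2 * n + 2 + 3) (by omega)).trans h3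
  exact hv ((cP (l + 3) (3 + 2 * k) (by omega)).trans (chain k le_rfl))

theorem F5_fourVertexCritical (ac4 bc4 : Bool) (k : ℕ) :
    FourVertexCritical (F5Graph ac4 bc4 (2 * k)) := by
  have hle : (2 * k) % 2 = 0 := by omega
  constructor
  · -- packing chromatic number is 4
    have h4 := F5_chi4_mem ac4 bc4 (2 * k) hle
    unfold packingChromaticNumber
    apply le_antisymm (Nat.sInf_le h4)
    by_contra hcon
    push_neg at hcon
    obtain ⟨c, hb', hp'⟩ := Nat.sInf_mem (⟨4, h4⟩ :
      Set.Nonempty {K | ∃ c, IsPackingColoring (F5Graph ac4 bc4 (2 * k)) K c})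
    exact F5_no3 ac4 bc4 (2 * k) k rfl c
      ⟨fun v => ⟨(hb' v).1, by have := (hb' v).2; omega⟩, hp'⟩
  · -- criticality
    intro w
    have hwlt := w.isLt
    rcases (by omega :
        w.val = 0 ∨ w.val = 1 ∨ w.val = 2 ∨ w.val = 3 ∨
        (4 ≤ w.val ∧ w.val ≤ 2 * k + 3) ∨ w.val = 2 * k + 4 ∨
        (2 * k + 5 ≤ w.val ∧ w.val ≤ 2 * k + 6) ∨ w.val = 2 * k + 7) with
      h | h | h | h | h | h | h | h
    · refine F5_del_lt ac4 bc4 (2 * k) w (cD0 (2 * k)) ?_ ?_ ?_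
      · intro i _; have := cD0_spec (2 * k) i; omega
      · intro a b ha hb hwa hwb hr hcc
        exact cD0_h1 (2 * k) a b hle ha hb (by omega) (by omega) hr hcc
      · intro a b ha hb hwa hwb hne he h2
        exact cD0_gap (2 * k) a b hle ha hb (by omega) (by omega) hne he h2
    · refine F5_del_lt ac4 bc4 (2 * k) w (cD1 (2 * k)) ?_ ?_ ?_
      · intro i _; have := cD1_spec (2 * k) i; omega
      · intro a b ha hb hwa hwb hr hcc
        exact cD1_h1 (2 * k) a b hle ha hb (by omega) (by omega) hr hcc
      · intro a b ha hb hwa hwb hne he h2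
        exact cD1_gap (2 * k) a b hle ha hb (by omega) (by omega) hne he h2
    · refine F5_del_lt ac4 bc4 (2 * k) w (cD2 (2 * k)) ?_ ?_ ?_
      · intro i _; have := cD2_spec (2 * k) i; omega
      · intro a b ha hb hwa hwb hr hcc
        exact cD2_h1 (2 * k) a b hle ha hb (by omega) (by omega) hr hcc
      · intro a b ha hb hwa hwb hne he h2
        exact cD2_gap (2 * k) a b hle ha hb (by omega) (by omega) hne he h2
    · refine F5_del_lt ac4 bc4 (2 * k) w (cD3 (2 * k)) ?_ ?_ ?_
      · intro i _; have := cD3_spec (2 * k) i; omega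
      · intro a b ha hb hwa hwb hr hcc
        exact cD3_h1 (2 * k) a b hle ha hb (by omega) (by omega) hr hcc
      · intro a b ha hb hwa hwb hne he h2
        exact cD3_gap (2 * k) a b hle ha hb (by omega) (by omega) hne he h2
    · refine F5_del_lt ac4 bc4 (2 * k) w (cDM (2 * k) w.val) ?_ ?_ ?_
      · intro i _; have := cDM_spec (2 * k) w.val i; omega
      · intro a b ha hb hwa hwb hr hcc
        exact cDM_h1 (2 * k) w.val a b hle ha hb h.1 h.2 hwa hwb hr hcc
      · intro a b ha hb hwa hwb hne he h2
        exact cDM_gap (2 * k) w.val a b hle ha hb h.1 h.2 hwa hwb hne he h2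
    · refine F5_del_lt ac4 bc4 (2 * k) w (cDV (2 * k)) ?_ ?_ ?_
      · intro i _; have := cDV_spec (2 * k) i; omega
      · intro a b ha hb hwa hwb hr hcc
        exact cDV_h1 (2 * k) a b hle ha hb (by omega) (by omega) hr hcc
      · intro a b ha hb hwa hwb hne he h2
        exact cDV_gap (2 * k) a b hle ha hb (by omega) (by omega) hne he h2
    · refine F5_del_lt ac4 bc4 (2 * k) w (cDP (2 * k)) ?_ ?_ ?_
      · intro i _; have := cDP_spec (2 * k) i; omega
      · intro a b ha hb hwa hwb hr hcc
        exact cDP_h1 (2 * k) w.val a b hle ha hb h.1 h.2 hwa hwb hr hcc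
      · intro a b ha hb hwa hwb hne he h2
        exact cDP_gap (2 * k) w.val a b hle ha hb h.1 h.2 hwa hwb hne he h2
    · refine F5_del_lt ac4 bc4 (2 * k) w (cDZ (2 * k)) ?_ ?_ ?_
      · intro i _; have := cDZ_spec (2 * k) i hle; omega
      · intro a b ha hb hwa hwb hr hcc
        exact cDZ_h1 (2 * k) a b hle ha hb (by omega) (by omega) hr hcc
      · intro a b ha hb hwa hwb hne he h2
        exact cDZ_gap (2 * k) a b hle ha hb (by omega) (by omega) hne he h2
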